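/- Let f : S¹ → ℂ be a C¹ immersion such that, writing f(e^{iθ})' (derivative in θ) = ρ(θ)e^{i(θ + h(θ))} with ρ > 0 and h a 2π-periodic real function satisfying 1 + h'(θ) > 0 for all θ (i.e. f is non-critical with Gauss degree 1). Then f is an embedding (injective). -/

import Mathlib

open scoped Real
open Complex

/-- A non-critical `C¹` immersed closed curve with Gauss degree `1` is an embedding:
if `F(θ) = f(e^{iθ})` satisfies `F'(θ) = ρ(θ) e^{i(θ + h(θ))}` with `ρ > 0`, `h` a `2π`-periodic
real function with `1 + h' > 0`, then `F` is injective on `[0, 2π)`. -/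
theorem noncritical_degree_one_is_embedding (F : ℝ → ℂ) (ρ h h' : ℝ → ℝ)
    (hF : ContDiff ℝ 1 F)
    (hFper : ∀ θ, F (θ + 2 * π) = F θ)
    (hρ : ∀ θ, 0 < ρ θ)
    (hhper : ∀ θ, h (θ + 2 * π) = h θ)
    (hh' : ∀ θ, HasDerivAt h (h' θ) θ)
    (hconv : ∀ θ, 0 < 1 + h' θ)
    (hFderiv : ∀ θ, deriv F θ = ρ θ * Complex.exp (Complex.I * (θ + h θ))) :
    ∀ θ₁ ∈ Set.Ico (0 : ℝ) (2 * π), ∀ θ₂ ∈ Set.Ico (0 : ℝ) (2 * π),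
      F θ₁ = F θ₂ → θ₁ = θ₂ := by
  -- tangent angle
  set φ : ℝ → ℝ := fun θ => θ + h θ with hφdef
  have hφd : ∀ θ, HasDerivAt φ (1 + h' θ) θ := fun θ => (hasDerivAt_id θ).add (hh' θ)
  have hφmono : StrictMono φ := by
    apply strictMono_of_deriv_pos  -- name check
    intro θ
    rw [(hφd θ).deriv]
    exact hconv θ
  have hFd : ∀ θ, HasDerivAt F (deriv F θ) θ :=
    fun θ => (hF.differentiable one_ne_zero θ).hasDerivAt
  -- key lemma
  have key : ∀ a b : ℝ, a < b → φ b - φ a ≤ π → F a ≠ F b := by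
    intro a b hab hle heq
    set g : ℝ → ℝ := fun θ => (Complex.exp (-(Complex.I * (φ a))) * F θ).im with hgdef
    have hgd : ∀ θ, HasDerivAt g (ρ θ * Real.sin (φ θ - φ a)) θ := by
      intro θ
      have h1 : HasDerivAt (fun θ => Complex.exp (-(Complex.I * (φ a : ℝ))) * F θ)
          (Complex.exp (-(Complex.I * (φ a : ℝ))) * deriv F θ) θ := (hFd θ).const_mul _
      have h2 : HasDerivAt g ((Complex.exp (-(Complex.I * (φ a : ℝ))) * deriv F θ).im) θ := by
        exact Complex.imCLM.hasFDerivAt.comp_hasDerivAt θ h1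
      convert h2 using 1
      rw [hFderiv θ]
      have : Complex.exp (-(Complex.I * (φ a : ℝ))) * (↑(ρ θ) * Complex.exp (Complex.I * (↑θ + ↑(h θ))))
          = ↑(ρ θ) * Complex.exp ((↑(φ θ - φ a) : ℂ) * Complex.I) := by
        rw [mul_comm (Complex.exp _), mul_assoc, ← Complex.exp_add]
        push_cast [hφdef]
        ring_nf
      rw [this, Complex.mul_im, Complex.exp_ofReal_mul_I_im]
      simp
    have hmono : StrictMonoOn g (Set.Icc a b) := by
      apply strictMonoOn_of_deriv_pos (convex_Icc a b)
      · exact fun θ _ => ((hgd θ).continuousAt).continuousWithinAt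
      · intro θ hθ
        rw [interior_Icc] at hθ
        rw [(hgd θ).deriv]
        apply mul_pos (hρ θ)
        apply Real.sin_pos_of_pos_of_lt_pi
        · have := hφmono hθ.1; linarith [sub_pos.mpr this]
        · have := hφmono hθ.2; linarith
    have : g a < g b := hmono (Set.left_mem_Icc.mpr hab.le) (Set.right_mem_Icc.mpr hab.le) hab
    rw [hgdef] at this
    simp only [heq] at this
    exact lt_irrefl _ this
  -- main argument
  have main : ∀ a b : ℝ, a ∈ Set.Ico (0:ℝ) (2*π) → b ∈ Set.Ico (0:ℝ) (2*π) → a < b →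
      F a = F b → False := by
    intro a b ha hb hab heq
    rcases le_or_gt (φ b - φ a) π with hcase | hcase
    · exact key a b hab hcase heq
    · have hb2 : b < a + 2 * π := lt_of_lt_of_le hb.2 (by linarith [ha.1])
      have hφ2 : φ (a + 2 * π) = φ a + 2 * π := by
        simp only [hφdef, hhper a]; ring
      have : φ (a + 2*π) - φ b ≤ π := by rw [hφ2]; linarith
      exact key b (a + 2*π) hb2 this (heq.symm.trans (hFper a).symm)
  intro θ₁ h₁ θ₂ h₂ heq
  by_contra hne
  rcases lt_or_gt_of_ne hne with hlt | hlt
  · exact absurd heq (fun e => main θ₁ θ₂ h₁ h₂ hlt e)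
  · exact absurd heq.symm (fun e => main θ₂ θ₁ h₂ h₁ hlt e)
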